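/- Let μ be an elliptic, non-degenerate, stationary ergodic probability measure over cookie environments. Then ℙ₀(T₋₁ = ∞) > 0 if and only if ℙ₀(A⁺) > 0, where A⁺ is the event lim_{n→∞} X_n = +∞. -/

import Mathlib

open Filter Set

/-- The number of `true`s (1's) appearing strictly before the `x`-th `false` (0)
in the binary sequence `b`; `Uplus b 0 = 0`. -/
noncomputable def Uplus (b : ℕ → Bool) (x : ℕ) : ℕ :=
  if x = 0 then 0
  else sInf {j : ℕ | ((Finset.range j).filter (fun i => b i = false)).card = x} - x

/-- The number of `false`s (0's) appearing strictly before the `x`-th `true` (1). -/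
noncomputable def Uminus (b : ℕ → Bool) (x : ℕ) : ℕ :=
  Uplus (fun i => !(b i)) x

/-- A binary sequence is non-degenerate if it has infinitely many 0's and
infinitely many 1's. -/
def NonDeg (b : ℕ → Bool) : Prop :=
  {i | b i = false}.Infinite ∧ {i | b i = true}.Infinite

/-- An arrow environment is non-degenerate if every column is non-degenerate. -/
def NonDegEnv (a : ℤ → ℕ → Bool) : Prop := ∀ x : ℤ, NonDeg (a x)

/-- The history (most recent position first) of the walk driven by the arrow
environment `a`, started at `0`: at its `k`-th visit (`k` counted from `0`)
to site `x` the walk moves right if `a x k = true` and left otherwise. -/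
def walkHist (a : ℤ → ℕ → Bool) : ℕ → List ℤ
  | 0 => [0]
  | t + 1 =>
    let h := walkHist a t
    let x := h.headI
    let k := h.countP (fun y => decide (y = x)) - 1
    (x + (if a x k then 1 else -1)) :: h

/-- The position at time `t` of the walk driven by `a`, started at `0`. -/
def walk (a : ℤ → ℕ → Bool) (t : ℕ) : ℤ := (walkHist a t).headI

/-- `Zplus a n y`: the forward process `Z⁺` with initial value `y`. -/
noncomputable def Zplus (a : ℤ → ℕ → Bool) : ℕ → ℕ → ℕ
  | 0, y => y
  | n + 1, y => Uplus (a (n : ℤ)) (Zplus a n y)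

/-- `Zminus a n y`: the backward process `Z⁻` with initial value `y`. -/
noncomputable def Zminus (a : ℤ → ℕ → Bool) : ℕ → ℕ → ℕ
  | 0, y => y
  | n + 1, y => Uminus (a (-(n : ℤ))) (Zminus a n y)

/-- `ZminusBack a l y = U⁻_{a 0} ∘ ⋯ ∘ U⁻_{a (l-1)} (y)`. -/
noncomputable def ZminusBack (a : ℤ → ℕ → Bool) (l y : ℕ) : ℕ :=
  (List.range l).foldr (fun i z => Uminus (a (i : ℤ)) z) y

open MeasureTheory
open scoped ENNReal


abbrev CookieSpace : Type := ℤ → ℕ → ℝ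
abbrev ArrowSpace : Type := ℤ → ℕ → Bool

/-- The `ℤ`-shift on cookie environments. -/
def shiftC (ω : CookieSpace) : CookieSpace := fun x => ω (x + 1)

/-- The `ℤ`-shift on arrow environments. -/
def shiftA (a : ArrowSpace) : ArrowSpace := fun x => a (x + 1)

/-- Shift of an arrow environment by `m` steps. -/
def shiftBy (m : ℤ) (a : ArrowSpace) : ArrowSpace := fun x => a (x + m)

/-- The arrow environment obtained from the cookie environment `ω` and the
source of uniform randomness `u`: `F(ω,u)(x,n) = 1_{u(x,n) < ω(x,n)}`. -/
noncomputable def arrows (ω u : CookieSpace) : ArrowSpace := fun x n => decide (u x n < ω x n)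

/-- `PU` is the product over `ℤ × ℕ` of i.i.d. uniform distributions on `[0,1]`,
characterized by its values on measurable cylinder sets. -/
def IsUniformProduct (PU : Measure CookieSpace) : Prop :=
  IsProbabilityMeasure PU ∧
    ∀ (S : Finset (ℤ × ℕ)) (B : ℤ × ℕ → Set ℝ), (∀ p, MeasurableSet (B p)) →
      PU {u | ∀ p ∈ S, u p.1 p.2 ∈ B p} = ∏ p ∈ S, volume (B p ∩ Set.Icc (0 : ℝ) 1)

/-- The annealed law of the arrow environment: sample `ω ~ μ` and `u ~ PU`
independently, and take the arrows `F(ω,u)`. -/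
noncomputable def annealed (μ PU : Measure CookieSpace) : Measure ArrowSpace :=
  (μ.prod PU).map (fun p => arrows p.1 p.2)

/-- `μ` is an elliptic measure over cookie environments. -/
def EllipticAE (μ : Measure CookieSpace) : Prop :=
  ∀ᵐ ω ∂μ, ∀ (x : ℤ) (n : ℕ), ω x n ∈ Set.Ioo (0 : ℝ) 1

/-- `μ` is a measure over cookie environments (cookies take values in `[0,1]`). -/
def CookieValued (μ : Measure CookieSpace) : Prop :=
  ∀ᵐ ω ∂μ, ∀ (x : ℤ) (n : ℕ), ω x n ∈ Set.Icc (0 : ℝ) 1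



section Counting

variable {p : ℕ → Prop} [DecidablePred p]

lemma card_filter_succ (p : ℕ → Prop) [DecidablePred p] (n : ℕ) :
    ((Finset.range (n+1)).filter p).card
      = ((Finset.range n).filter p).card + (if p n then 1 else 0) := by
  rw [Finset.range_add_one, Finset.filter_insert]
  split
  · rw [Finset.card_insert_of_notMem (by simp)]
  · simp

lemma card_filter_mono (p : ℕ → Prop) [DecidablePred p] {m n : ℕ} (h : m ≤ n) :
    ((Finset.range m).filter p).card ≤ ((Finset.range n).filter p).card :=
  Finset.card_le_card (Finset.filter_subset_filter _ (Finset.range_subset_range.2 h))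

lemma card_filter_ivt (p : ℕ → Prop) [DecidablePred p] :
    ∀ {n k : ℕ}, k ≤ ((Finset.range n).filter p).card →
      ∃ j ≤ n, ((Finset.range j).filter p).card = k := by
  intro n
  induction n with
  | zero => intro k hk; simp at hk; exact ⟨0, le_rfl, by simp [hk]⟩
  | succ n ih =>
    intro k hk
    by_cases h : k ≤ ((Finset.range n).filter p).card
    · obtain ⟨j, hj, hjk⟩ := ih h
      exact ⟨j, hj.trans (Nat.le_succ n), hjk⟩
    · refine ⟨n+1, le_rfl, ?_⟩
      rw [card_filter_succ] at hk ⊢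
      by_cases hpn : p n <;> simp only [hpn, if_true, if_false] at hk ⊢ <;> omega

lemma card_filter_unbounded (hp : {i | p i}.Infinite) (k : ℕ) :
    ∃ n, k ≤ ((Finset.range n).filter p).card := by
  induction k with
  | zero => exact ⟨0, Nat.zero_le _⟩
  | succ k ih =>
    obtain ⟨n, hn⟩ := ih
    obtain ⟨i, hi, hni⟩ := hp.exists_gt n
    refine ⟨i+1, ?_⟩
    have h1 : ((Finset.range n).filter p).card ≤ ((Finset.range i).filter p).card :=
      card_filter_mono p hni.le
    have hpi : p i := hi
    have h2 := card_filter_succ p i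
    simp only [hpi, if_true] at h2
    omega

lemma card_filter_exists_eq (hp : {i | p i}.Infinite) (k : ℕ) :
    ∃ n, ((Finset.range n).filter p).card = k := by
  obtain ⟨n, hn⟩ := card_filter_unbounded hp k
  obtain ⟨j, _, hj⟩ := card_filter_ivt p hn
  exact ⟨j, hj⟩

lemma exists_visit (hp : {i | p i}.Infinite) (k : ℕ) :
    ∃ n, p n ∧ ((Finset.range n).filter p).card = k := by
  obtain ⟨n, hn⟩ := card_filter_exists_eq hp (k+1)
  have hex : ∃ m, ((Finset.range m).filter p).card = k + 1 := ⟨n, hn⟩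
  classical
  set m := Nat.find hex with hm
  have hmval : ((Finset.range m).filter p).card = k + 1 := Nat.find_spec hex
  rcases Nat.eq_zero_or_eq_succ_pred m with h0 | hs
  · rw [h0] at hmval; simp at hmval
  · set m' := m - 1 with hm'
    have hmm : m = m' + 1 := hs
    have hlt : ((Finset.range m').filter p).card ≠ k + 1 := by
      have := Nat.find_min hex (m := m') (by omega)
      exact this
    have hsucc := card_filter_succ p m'
    rw [← hmm, hmval] at hsucc
    by_cases hpm : p m'
    · simp only [hpm, if_true] at hsucc
      exact ⟨m', hpm, by omega⟩
    · simp only [hpm, if_false] at hsucc; omega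

end Counting

section WalkBasics

variable (a : ℤ → ℕ → Bool)

/-- number of visits of the walk to site `x` strictly before time `t`. -/
def vis (x : ℤ) (t : ℕ) : ℕ := ((Finset.range t).filter (fun s => walk a s = x)).card

/-- number of up-moves from `x` strictly before time `t`. -/
def upTo (x : ℤ) (t : ℕ) : ℕ :=
  ((Finset.range t).filter (fun s => walk a s = x ∧ walk a (s+1) = x + 1)).card

/-- number of down-moves from `x` strictly before time `t`. -/
def dnTo (x : ℤ) (t : ℕ) : ℕ :=
  ((Finset.range t).filter (fun s => walk a s = x ∧ walk a (s+1) = x - 1)).card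

lemma walk_zero : walk a 0 = 0 := rfl

lemma walkHist_succ (t : ℕ) : walkHist a (t+1) = walk a (t+1) :: walkHist a t := rfl

lemma vis_succ (x : ℤ) (t : ℕ) :
    vis a x (t+1) = vis a x t + (if walk a t = x then 1 else 0) :=
  card_filter_succ _ t

lemma countP_walkHist (x : ℤ) (t : ℕ) :
    (walkHist a t).countP (fun y => decide (y = x)) = vis a x (t+1) := by
  induction t with
  | zero =>
    show List.countP _ [0] = _
    rw [List.countP_cons, List.countP_nil]
    simp [vis, walk_zero, Finset.filter_singleton, Finset.range_one]
    by_cases h : (0:ℤ) = x <;> simp [h]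
  | succ t ih =>
    rw [walkHist_succ, List.countP_cons, ih, vis_succ a x (t+1)]
    by_cases h : walk a (t+1) = x <;> simp [h]

lemma walk_succ (t : ℕ) :
    walk a (t+1) = walk a t + (if a (walk a t) (vis a (walk a t) t) then 1 else -1) := by
  conv_lhs => rw [walk, walkHist]
  show (walkHist a t).headI +
      (if a ((walkHist a t).headI)
          ((walkHist a t).countP (fun y => decide (y = (walkHist a t).headI)) - 1) then 1 else -1)
      = _
  have hh : (walkHist a t).headI = walk a t := rfl
  rw [hh, countP_walkHist a (walk a t) t, vis_succ a (walk a t) t, if_pos rfl]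
  norm_num

lemma step_cases (t : ℕ) : walk a (t+1) = walk a t + 1 ∨ walk a (t+1) = walk a t - 1 := by
  rw [walk_succ]; split
  · left; rfl
  · right; rfl

lemma step_up_iff (t : ℕ) :
    walk a (t+1) = walk a t + 1 ↔ a (walk a t) (vis a (walk a t) t) = true := by
  rw [walk_succ]; split <;> rename_i h <;> simp [h]

lemma step_dn_iff (t : ℕ) :
    walk a (t+1) = walk a t - 1 ↔ a (walk a t) (vis a (walk a t) t) = false := by
  rw [walk_succ]; split <;> rename_i h <;> simp [h] <;> omega

end WalkBasics
section WalkMore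

variable (a : ℤ → ℕ → Bool)

/-- number of `true`s among the first `j` coins. -/
def cntT (b : ℕ → Bool) (j : ℕ) : ℕ := ((Finset.range j).filter (fun i => b i = true)).card

/-- number of `false`s among the first `j` coins. -/
def cntF (b : ℕ → Bool) (j : ℕ) : ℕ := ((Finset.range j).filter (fun i => b i = false)).card

lemma cntT_add_cntF (b : ℕ → Bool) (j : ℕ) : cntT b j + cntF b j = j := by
  induction j with
  | zero => simp [cntT, cntF]
  | succ j ih =>
    unfold cntT cntF at *
    rw [card_filter_succ, card_filter_succ]
    cases hb : b j <;> simp [hb] <;> omega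

lemma cntT_mono (b : ℕ → Bool) {i j : ℕ} (h : i ≤ j) : cntT b i ≤ cntT b j :=
  card_filter_mono _ h

lemma cntF_mono (b : ℕ → Bool) {i j : ℕ} (h : i ≤ j) : cntF b i ≤ cntF b j :=
  card_filter_mono _ h

lemma cons_up (x : ℤ) (t : ℕ) : upTo a x t = cntT (a x) (vis a x t) := by
  induction t with
  | zero => simp [upTo, cntT, vis]
  | succ t ih =>
    unfold upTo at *
    rw [card_filter_succ, vis_succ]
    by_cases h : walk a t = x
    · rw [if_pos h]
      unfold cntT
      rw [card_filter_succ]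
      have hiff : (walk a t = x ∧ walk a (t+1) = x + 1) ↔ a x (vis a x t) = true := by
        constructor
        · rintro ⟨-, h2⟩
          have := (step_up_iff a t).1 (by rw [h]; exact h2)
          rwa [h] at this
        · intro hc
          refine ⟨h, ?_⟩
          have := (step_up_iff a t).2 (by rwa [h])
          rw [this, h]
      rw [ih]
      by_cases hc : a x (vis a x t) = true
      · rw [if_pos (hiff.2 hc), if_pos hc]; simp [cntT]
      · rw [if_neg (fun hh => hc (hiff.1 hh)), if_neg hc]; simp [cntT]
    · rw [if_neg (by tauto), if_neg h, ih]
      simp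

lemma cons_dn (x : ℤ) (t : ℕ) : dnTo a x t = cntF (a x) (vis a x t) := by
  induction t with
  | zero => simp [dnTo, cntF, vis]
  | succ t ih =>
    unfold dnTo at *
    rw [card_filter_succ, vis_succ]
    by_cases h : walk a t = x
    · rw [if_pos h]
      unfold cntF
      rw [card_filter_succ]
      have hiff : (walk a t = x ∧ walk a (t+1) = x - 1) ↔ a x (vis a x t) = false := by
        constructor
        · rintro ⟨-, h2⟩
          have := (step_dn_iff a t).1 (by rw [h]; exact h2)
          rwa [h] at this
        · intro hc
          refine ⟨h, ?_⟩
          have := (step_dn_iff a t).2 (by rwa [h])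
          rw [this, h]
      rw [ih]
      by_cases hc : a x (vis a x t) = false
      · rw [if_pos (hiff.2 hc), if_pos hc]; simp [cntF]
      · rw [if_neg (fun hh => hc (hiff.1 hh)), if_neg hc]; simp [cntF]
    · rw [if_neg (by tauto), if_neg h, ih]
      simp

lemma vis_split (x : ℤ) (t : ℕ) : vis a x t = upTo a x t + dnTo a x t := by
  induction t with
  | zero => simp [vis, upTo, dnTo]
  | succ t ih =>
    unfold vis upTo dnTo at *
    rw [card_filter_succ, card_filter_succ, card_filter_succ, ih]
    rcases step_cases a t with h | h <;> by_cases hx : walk a t = x <;>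
      split_ifs <;> omega

lemma edge_balance (m : ℤ) (hm : 0 ≤ m) (t : ℕ) :
    upTo a m t = dnTo a (m+1) t + (if m + 1 ≤ walk a t then 1 else 0) := by
  induction t with
  | zero =>
    simp [upTo, dnTo, walk_zero, show ¬ (m + 1 ≤ (0:ℤ)) by omega]
  | succ t ih =>
    unfold upTo dnTo at *
    rw [card_filter_succ, card_filter_succ, ih]
    rcases step_cases a t with h | h <;> split_ifs <;> omega

lemma ivt_up (m : ℤ) : ∀ t s, s ≤ t → walk a s ≤ m → m ≤ walk a t →
    ∃ r, s ≤ r ∧ r ≤ t ∧ walk a r = m := by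
  intro t
  induction t with
  | zero =>
    intro s hs h1 h2
    have hs0 : s = 0 := Nat.le_zero.mp hs
    subst hs0
    exact ⟨0, le_rfl, le_rfl, le_antisymm h1 h2⟩
  | succ t ih =>
    intro s hs h1 h2
    rcases Nat.eq_or_lt_of_le hs with heq | hlt
    · subst heq; exact ⟨t+1, le_rfl, le_rfl, le_antisymm h1 h2⟩
    · have hst : s ≤ t := by omega
      by_cases h : m ≤ walk a t
      · obtain ⟨r, hr1, hr2, hr3⟩ := ih s hst h1 h
        exact ⟨r, hr1, hr2.trans (Nat.le_succ t), hr3⟩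
      · rcases step_cases a t with hstep | hstep
        · exact ⟨t+1, by omega, le_rfl, by omega⟩
        · omega

lemma ivt_dn (m : ℤ) : ∀ t s, s ≤ t → m ≤ walk a s → walk a t ≤ m →
    ∃ r, s ≤ r ∧ r ≤ t ∧ walk a r = m := by
  intro t
  induction t with
  | zero =>
    intro s hs h1 h2
    have hs0 : s = 0 := Nat.le_zero.mp hs
    subst hs0
    exact ⟨0, le_rfl, le_rfl, le_antisymm h2 h1⟩
  | succ t ih =>
    intro s hs h1 h2
    rcases Nat.eq_or_lt_of_le hs with heq | hlt
    · subst heq; exact ⟨t+1, le_rfl, le_rfl, le_antisymm h2 h1⟩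
    · have hst : s ≤ t := by omega
      by_cases h : walk a t ≤ m
      · obtain ⟨r, hr1, hr2, hr3⟩ := ih s hst h1 h
        exact ⟨r, hr1, hr2.trans (Nat.le_succ t), hr3⟩
      · rcases step_cases a t with hstep | hstep
        · omega
        · exact ⟨t+1, by omega, le_rfl, by omega⟩

lemma nonneg_of_never (h : ∀ t, walk a t ≠ -1) : ∀ t, 0 ≤ walk a t := by
  intro t
  induction t with
  | zero => rw [walk_zero]
  | succ t ih =>
    have := h (t+1)
    rcases step_cases a t with hs | hs <;> omega

lemma walk_le_time (t : ℕ) : walk a t ≤ (t : ℤ) := by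
  induction t with
  | zero => simp [walk_zero]
  | succ t ih =>
    rcases step_cases a t with hs | hs <;> push_cast <;> omega

end WalkMore
section Ulemmas

lemma cntT_eq_not_false (b : ℕ → Bool) (j : ℕ) :
    ((Finset.range j).filter (fun i => (!(b i)) = false)).card = cntT b j := by
  unfold cntT
  congr 1
  apply Finset.filter_congr
  intro i _
  simp

lemma Uminus_eq (b : ℕ → Bool) (x : ℕ) :
    Uminus b x = if x = 0 then 0 else sInf {j : ℕ | cntT b j = x} - x := by
  unfold Uminus Uplus
  split
  · rfl
  · congr 2
    ext j
    rw [mem_setOf_eq, mem_setOf_eq, cntT_eq_not_false]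

lemma Uminus_zero (b : ℕ → Bool) : Uminus b 0 = 0 := by rw [Uminus_eq]; simp

lemma Uminus_eq_cntF (b : ℕ → Bool) {u : ℕ} (hu : u ≠ 0)
    (hne : {j : ℕ | cntT b j = u}.Nonempty) :
    Uminus b u = cntF b (sInf {j : ℕ | cntT b j = u}) := by
  rw [Uminus_eq, if_neg hu]
  have hmem : cntT b (sInf {j : ℕ | cntT b j = u}) = u := Nat.sInf_mem hne
  have := cntT_add_cntF b (sInf {j : ℕ | cntT b j = u})
  omega

lemma cntT_exists {b : ℕ → Bool} (hb : {i | b i = true}.Infinite) (u : ℕ) :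
    {j : ℕ | cntT b j = u}.Nonempty := by
  obtain ⟨n, hn⟩ := card_filter_exists_eq hb u
  exact ⟨n, hn⟩

lemma Umono (b : ℕ → Bool) {u u' : ℕ} (h : u ≤ u')
    (hne : {j : ℕ | cntT b j = u'}.Nonempty) : Uminus b u ≤ Uminus b u' := by
  rcases Nat.eq_zero_or_pos u with rfl | hu
  · rw [Uminus_zero]; exact Nat.zero_le _
  · have hu' : u' ≠ 0 := by omega
    set J' := sInf {j : ℕ | cntT b j = u'} with hJ'
    have hmem' : cntT b J' = u' := Nat.sInf_mem hne
    obtain ⟨j, hjle, hj⟩ := card_filter_ivt (fun i => b i = true) (n := J') (k := u)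
      (by rw [show ((Finset.range J').filter (fun i => b i = true)).card = cntT b J' from rfl, hmem']; exact h)
    have hne2 : {j : ℕ | cntT b j = u}.Nonempty := ⟨j, hj⟩
    rw [Uminus_eq_cntF b (by omega) hne2, Uminus_eq_cntF b hu' hne]
    have hle : sInf {j : ℕ | cntT b j = u} ≤ J' := le_trans (Nat.sInf_le hj) hjle
    exact cntF_mono b hle

lemma Ulower (b : ℕ → Bool) {u c c' : ℕ} (h : cntT b (c + c') = c') (hu : c' + 1 ≤ u)
    (hne : {j : ℕ | cntT b j = u}.Nonempty) : c ≤ Uminus b u := by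
  have hu0 : u ≠ 0 := by omega
  set J := sInf {j : ℕ | cntT b j = u} with hJ
  have hmem : cntT b J = u := Nat.sInf_mem hne
  have hJgt : c + c' ≤ J := by
    by_contra hcon
    have : cntT b J ≤ cntT b (c + c') := cntT_mono b (by omega)
    omega
  have h1 : cntF b (c + c') = c := by
    have := cntT_add_cntF b (c + c')
    omega
  rw [Uminus_eq_cntF b hu0 hne]
  calc c = cntF b (c + c') := h1.symm
    _ ≤ cntF b J := cntF_mono b hJgt

end Ulemmas

section Sol

/-- iterates of the backward recursion with boundary value 1 at depth `k`. -/
noncomputable def solAux (c : ℕ → ℕ → Bool) : ℕ → ℕ → ℕ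
  | _, 0 => 1
  | m, k+1 => Uminus (c m) (solAux c (m+1) k) + 1

@[simp] lemma solAux_zero (c : ℕ → ℕ → Bool) (m : ℕ) : solAux c m 0 = 1 := by simp [solAux]

@[simp] lemma solAux_succ (c : ℕ → ℕ → Bool) (m k : ℕ) :
    solAux c m (k+1) = Uminus (c m) (solAux c (m+1) k) + 1 := by simp [solAux]

/-- every column of `c` has infinitely many `true`s. -/
def NDpos (c : ℕ → ℕ → Bool) : Prop := ∀ m, {i | c m i = true}.Infinite

/-- the iterates are bounded (in `k`), for every `m`. -/
def Bd (c : ℕ → ℕ → Bool) : Prop := ∀ m, ∃ b, ∀ k, solAux c m k ≤ b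

/-- the iterates at `m = 0` stabilize to the value `n`. -/
def Stab (c : ℕ → ℕ → Bool) (n : ℕ) : Prop := ∃ K, ∀ k, K ≤ k → solAux c 0 k = n

/-- the limit of the iterates. -/
noncomputable def ustar (c : ℕ → ℕ → Bool) (m : ℕ) : ℕ :=
  sSup (Set.range (fun k => solAux c m k))

lemma solAux_one (c : ℕ → ℕ → Bool) (m k : ℕ) : 1 ≤ solAux c m k := by
  cases k <;> simp

lemma solAux_mono (c : ℕ → ℕ → Bool) (hc : NDpos c) :
    ∀ k m, solAux c m k ≤ solAux c m (k+1) := by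
  intro k
  induction k with
  | zero => intro m; exact solAux_one c m 1
  | succ k ih =>
    intro m
    rw [solAux_succ, solAux_succ]
    exact Nat.add_le_add_right (Umono (c m) (ih (m+1)) (cntT_exists (hc m) _)) 1

lemma solAux_mono_le (c : ℕ → ℕ → Bool) (hc : NDpos c) {k k' : ℕ} (h : k ≤ k') (m : ℕ) :
    solAux c m k ≤ solAux c m k' := by
  induction k' with
  | zero => have : k = 0 := by omega
            subst this; exact le_rfl
  | succ k' ih =>
    rcases Nat.eq_or_lt_of_le h with heq | hlt
    · subst heq; exact le_rfl
    · exact le_trans (ih (by omega)) (solAux_mono c hc k' m)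

lemma ustar_le (c : ℕ → ℕ → Bool) (hB : Bd c) (m k : ℕ) : solAux c m k ≤ ustar c m := by
  obtain ⟨b, hb⟩ := hB m
  exact le_csSup ⟨b, by rintro y ⟨k', rfl⟩; exact hb k'⟩ ⟨k, rfl⟩

lemma ustar_attained (c : ℕ → ℕ → Bool) (hB : Bd c) (m : ℕ) :
    ∃ k, solAux c m k = ustar c m := by
  obtain ⟨b, hb⟩ := hB m
  have hmem : ustar c m ∈ Set.range (fun k => solAux c m k) :=
    Nat.sSup_mem ⟨1, 0, rfl⟩ ⟨b, by rintro y ⟨k', rfl⟩; exact hb k'⟩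
  obtain ⟨k, hk⟩ := hmem
  exact ⟨k, hk⟩

lemma ustar_one (c : ℕ → ℕ → Bool) (hB : Bd c) (m : ℕ) : 1 ≤ ustar c m :=
  le_trans (solAux_one c m 0) (ustar_le c hB m 0)

lemma ustar_rec (c : ℕ → ℕ → Bool) (hc : NDpos c) (hB : Bd c) (m : ℕ) :
    Uminus (c m) (ustar c (m+1)) + 1 ≤ ustar c m := by
  obtain ⟨k₁, hk₁⟩ := ustar_attained c hB (m+1)
  calc Uminus (c m) (ustar c (m+1)) + 1 = solAux c m (k₁+1) := by
        rw [solAux_succ, hk₁]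
    _ ≤ ustar c m := ustar_le c hB m _

lemma stab_exists (c : ℕ → ℕ → Bool) (hc : NDpos c) (hB : Bd c) : Stab c (ustar c 0) := by
  obtain ⟨K, hK⟩ := ustar_attained c hB 0
  refine ⟨K, fun k hk => le_antisymm (ustar_le c hB 0 k) ?_⟩
  calc ustar c 0 = solAux c 0 K := hK.symm
    _ ≤ solAux c 0 k := solAux_mono_le c hc hk 0

lemma stab_val (c : ℕ → ℕ → Bool) (hc : NDpos c) (hB : Bd c) {n : ℕ} (hs : Stab c n) :
    ustar c 0 = n := by
  obtain ⟨K, hK⟩ := hs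
  obtain ⟨K', hK'⟩ := ustar_attained c hB 0
  have h1 := hK (max K K') (le_max_left _ _)
  have h2 : solAux c 0 K' ≤ solAux c 0 (max K K') := solAux_mono_le c hc (le_max_right _ _) 0
  have h3 := ustar_le c hB 0 (max K K')
  omega

end Sol
section EasyDirection

lemma descend (a : ℤ → ℕ → Bool) (hND : NonDegEnv a) (x : ℤ)
    (hvis : {t | walk a t = x}.Infinite) : {t | walk a t = x - 1}.Infinite := by
  classical
  have hfalse : {j | a x j = false}.Infinite := (hND x).1
  have hchoice : ∀ j : ℕ, ∃ n, walk a n = x ∧ vis a x n = j := by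
    intro j
    obtain ⟨n, hn1, hn2⟩ := exists_visit (p := fun s => walk a s = x) hvis j
    exact ⟨n, hn1, hn2⟩
  choose s hs1 hs2 using hchoice
  have : Infinite ↥{j | a x j = false} := Set.infinite_coe_iff.mpr hfalse
  refine Set.infinite_of_injective_forall_mem
    (f := fun j : ↥{j | a x j = false} => s (j : ℕ) + 1) ?_ ?_
  · intro j1 j2 h
    simp only at h
    have h' : s (j1 : ℕ) = s (j2 : ℕ) := by omega
    have := hs2 (j1 : ℕ)
    rw [h', hs2 (j2 : ℕ)] at this
    exact Subtype.ext this.symm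
  · rintro ⟨j, hj⟩
    simp only [Set.mem_setOf_eq]
    have hdn : walk a (s j + 1) = walk a (s j) - 1 := by
      apply (step_dn_iff a (s j)).2
      rw [hs1 j, hs2 j]
      exact hj
    rw [hdn, hs1 j]

lemma tendsto_of_never (a : ℤ → ℕ → Bool) (hND : NonDegEnv a)
    (hS : ∀ t, walk a t ≠ -1) : Tendsto (walk a) atTop atTop := by
  classical
  have hpos := nonneg_of_never a hS
  rw [tendsto_atTop]
  by_contra hcon
  push_neg at hcon
  obtain ⟨b, hb⟩ := hcon
  have hfreq : {t | ¬ b ≤ walk a t}.Infinite := by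
    rw [← Nat.frequently_atTop_iff_infinite]
    exact hb.mono fun t ht => not_le.mpr ht
  -- pigeonhole: some site in [0, b) is visited infinitely often
  have hx : ∃ x : ℤ, {t | walk a t = x}.Infinite := by
    by_contra hfin
    push_neg at hfin
    have hsub : {t | ¬ b ≤ walk a t} ⊆ ⋃ x ∈ Set.Ico (0:ℤ) b, {t | walk a t = x} := by
      intro t ht
      simp only [Set.mem_setOf_eq, not_le] at ht
      simp only [Set.mem_iUnion]
      exact ⟨walk a t, ⟨hpos t, ht⟩, rfl⟩
    exact hfreq (((Set.finite_Ico (0:ℤ) b).biUnion (fun x _ => hfin x)).subset hsub)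
  obtain ⟨x, hxinf⟩ := hx
  have hx0 : 0 ≤ x := by
    obtain ⟨t, ht⟩ := hxinf.nonempty
    rw [← ht]; exact hpos t
  -- descend to -1
  have hdesc : ∀ n : ℕ, ∀ y : ℤ, y = (n : ℤ) → {t | walk a t = y}.Infinite →
      {t | walk a t = -1}.Infinite := by
    intro n
    induction n with
    | zero =>
      intro y hy hinf
      have := descend a hND y hinf
      have hy1 : y - 1 = -1 := by omega
      rwa [hy1] at this

    | succ n ih =>
      intro y hy hinf
      have h1 := descend a hND y hinf
      exact ih (y - 1) (by omega) h1
  have hbad := hdesc x.toNat x (by omega) hxinf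
  obtain ⟨t, ht⟩ := hbad.nonempty
  exact hS t ht

end EasyDirection
section SuperSolution

/-- the columns of an arrow environment at the sites `1, 2, 3, ...`. -/
def posCols (a : ℤ → ℕ → Bool) : ℕ → ℕ → Bool := fun m j => a ((m : ℤ) + 1) j

lemma counts_freeze (a : ℤ → ℕ → Bool) (x : ℤ) (t : ℕ) (h : ∀ r, t ≤ r → walk a r ≠ x) :
    ∀ t', t ≤ t' →
      vis a x t' = vis a x t ∧ upTo a x t' = upTo a x t ∧ dnTo a x t' = dnTo a x t := by
  intro t' ht'
  induction t', ht' using Nat.le_induction with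
  | base => exact ⟨rfl, rfl, rfl⟩
  | succ t'' ht'' ih =>
    obtain ⟨ih1, ih2, ih3⟩ := ih
    have hne : ¬ walk a t'' = x := h t'' ht''
    refine ⟨?_, ?_, ?_⟩
    · rw [vis_succ, if_neg hne, ih1]; omega
    · unfold upTo
      rw [card_filter_succ, if_neg (by tauto)]
      unfold upTo at ih2
      omega
    · unfold dnTo
      rw [card_filter_succ, if_neg (by tauto)]
      unfold dnTo at ih3
      omega

lemma bd_of_tendsto (a : ℤ → ℕ → Bool) (hND : NonDegEnv a)
    (hT : Tendsto (walk a) atTop atTop) : Bd (posCols a) := by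
  classical
  have hvf : ∀ x : ℤ, ∃ t₀, ∀ t, t₀ ≤ t → x < walk a t := by
    intro x
    have := (tendsto_atTop.mp hT) (x + 1)
    rw [eventually_atTop] at this
    obtain ⟨t₀, ht₀⟩ := this
    exact ⟨t₀, fun t ht => by have := ht₀ t ht; omega⟩
  choose T hTx using hvf
  -- the total number of up-moves from each nonnegative site
  set v : ℕ → ℕ := fun m => upTo a (m : ℤ) (T (m : ℤ)) with hv
  have hnever : ∀ (x : ℤ) (r : ℕ), T x ≤ r → walk a r ≠ x := by
    intro x r hr
    have := hTx x r hr; omega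
  -- v is positive
  have v_pos : ∀ m : ℕ, 1 ≤ v m := by
    intro m
    set x := (m : ℤ) with hx
    have hx0 : (0:ℤ) ≤ x := Int.natCast_nonneg m
    -- some visit to x
    obtain ⟨r, -, hr2, hr3⟩ := ivt_up a x (T x) 0 (Nat.zero_le _)
      (by rw [walk_zero]; exact hx0) (le_of_lt (hTx x (T x) le_rfl))
    have hrlt : r < T x := by
      rcases Nat.eq_or_lt_of_le hr2 with heq | hlt
      · exfalso; exact hnever x r (le_of_eq heq.symm) hr3
      · exact hlt
    -- last visit
    have hFne : ((Finset.range (T x)).filter (fun s => walk a s = x)).Nonempty :=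
      ⟨r, by rw [Finset.mem_filter, Finset.mem_range]; exact ⟨hrlt, hr3⟩⟩
    have hs₀mem := Finset.max'_mem _ hFne
    rw [Finset.mem_filter, Finset.mem_range] at hs₀mem
    set s₀ := ((Finset.range (T x)).filter (fun s => walk a s = x)).max' hFne with hs₀
    obtain ⟨hs₀lt, hs₀x⟩ := hs₀mem
    have hup : walk a (s₀ + 1) = x + 1 := by
      rcases step_cases a s₀ with hstep | hstep
      · rw [hstep, hs₀x]
      · exfalso
        have h1 : s₀ + 1 ≤ T x := hs₀lt
        obtain ⟨r', hr'1, hr'2, hr'3⟩ := ivt_up a x (T x) (s₀+1) h1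
          (by rw [hstep, hs₀x]; omega) (le_of_lt (hTx x (T x) le_rfl))
        have hr'lt : r' < T x := by
          rcases Nat.eq_or_lt_of_le hr'2 with heq | hlt
          · exfalso; exact hnever x r' (le_of_eq heq.symm) hr'3
          · exact hlt
        have hmem : r' ∈ (Finset.range (T x)).filter (fun s => walk a s = x) := by
          rw [Finset.mem_filter, Finset.mem_range]; exact ⟨hr'lt, hr'3⟩
        have := Finset.le_max' _ r' hmem
        omega
    have : s₀ ∈ (Finset.range (T x)).filter (fun s => walk a s = x ∧ walk a (s+1) = x + 1) := by
      rw [Finset.mem_filter, Finset.mem_range]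
      exact ⟨hs₀lt, hs₀x, hup⟩
    have hcard := Finset.card_pos.mpr ⟨s₀, this⟩
    exact hcard
  -- supersolution property
  have v_super : ∀ m : ℕ, Uminus (a ((m:ℤ)+1)) (v (m+1)) + 1 ≤ v m := by
    intro m
    set x := (m : ℤ) with hx
    have hx0 : (0:ℤ) ≤ x := Int.natCast_nonneg m
    set t₁ := max (T x) (T (x+1)) with ht₁
    have hfx := counts_freeze a x (T x) (hnever x) t₁ (le_max_left _ _)
    have hfx1 := counts_freeze a (x+1) (T (x+1)) (hnever (x+1)) t₁ (le_max_right _ _)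
    have hcast : ((m+1 : ℕ) : ℤ) = x + 1 := by push_cast [hx]; ring
    have hvm1 : upTo a (x+1) t₁ = v (m+1) := by
      rw [hfx1.2.1, hv]
      simp only
      rw [hcast]
    have hvm : upTo a x t₁ = v m := by rw [hfx.2.1]
    set V := vis a (x+1) t₁ with hV
    set d := dnTo a (x+1) t₁ with hd
    have hcons : cntT (a (x+1)) V = v (m+1) := by rw [← cons_up, hvm1]
    have hconsF : cntF (a (x+1)) V = d := by rw [← cons_dn]
    have hsplit : V = v (m+1) + d := by
      rw [hV, vis_split, hvm1]
    have hbal : v m = d + 1 := by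
      have := edge_balance a x hx0 t₁
      rw [hvm] at this
      rw [if_pos (le_of_lt (hTx (x+1) t₁ (le_max_right _ _)))] at this
      omega
    have hu1 : v (m+1) ≠ 0 := by have := v_pos (m+1); omega
    have hne : {j : ℕ | cntT (a (x+1)) j = v (m+1)}.Nonempty := ⟨V, hcons⟩
    have hUb : Uminus (a (x+1)) (v (m+1)) ≤ d := by
      rw [Uminus_eq_cntF _ hu1 hne]
      calc cntF (a (x+1)) (sInf {j : ℕ | cntT (a (x+1)) j = v (m+1)})
          ≤ cntF (a (x+1)) V := cntF_mono _ (Nat.sInf_le hcons)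
        _ = d := hconsF
    omega
  -- conclude boundedness
  intro m
  refine ⟨v m, fun k => ?_⟩
  induction k generalizing m with
  | zero => simpa using v_pos m
  | succ k ih =>
    rw [solAux_succ]
    have hponc : posCols a m = a ((m:ℤ)+1) := rfl
    have hmono : Uminus (a ((m:ℤ)+1)) (solAux (posCols a) (m+1) k)
        ≤ Uminus (a ((m:ℤ)+1)) (v (m+1)) := by
      apply Umono _ (ih (m+1))
      apply cntT_exists
      exact (hND ((m:ℤ)+1)).2
    rw [hponc]
    have := v_super m
    omega

end SuperSolution
section FinalDeterministic

lemma never_of_flow (a : ℤ → ℕ → Bool) (hndp : NDpos (posCols a)) (hB : Bd (posCols a))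
    {n : ℕ} (hs : Stab (posCols a) n) (hforce : ∀ j, j < n → a 0 j = true) :
    ∀ t, walk a t ≠ -1 := by
  classical
  by_contra hcon
  push_neg at hcon
  have hex : ∃ t, walk a t = -1 := hcon
  set T := Nat.find hex with hTdef
  have hT : walk a T = -1 := Nat.find_spec hex
  have hmin : ∀ s, s < T → walk a s ≠ -1 := fun s hs => Nat.find_min hex hs
  have hT0 : T ≠ 0 := by
    intro h; rw [h, walk_zero] at hT; omega
  have hpre : ∀ s, s < T → 0 ≤ walk a s := by
    intro s
    induction s with
    | zero => intro _; rw [walk_zero]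
    | succ s ih =>
      intro hlt
      have h1 := ih (by omega)
      have h2 := hmin (s+1) hlt
      rcases step_cases a s with hstep | hstep <;> omega
  set c : ℕ → ℕ := fun m => upTo a (m : ℤ) T with hc
  have hbal : ∀ m : ℕ, dnTo a ((m:ℤ)+1) T = c m := by
    intro m
    have h := edge_balance a (m:ℤ) (Int.natCast_nonneg m) T
    rw [if_neg (by rw [hT]; omega)] at h
    show dnTo a ((m:ℤ)+1) T = upTo a (m:ℤ) T
    omega
  have hconsum : ∀ m : ℕ, vis a ((m:ℤ)+1) T = c m + c (m+1) := by
    intro m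
    have h1 := vis_split a ((m:ℤ)+1) T
    have h2 : upTo a ((m:ℤ)+1) T = c (m+1) := by
      show upTo a ((m:ℤ)+1) T = upTo a ((m+1 : ℕ) : ℤ) T
      norm_cast
    rw [h1, h2, hbal m]; omega
  have hcnt : ∀ m : ℕ, cntT (a ((m:ℤ)+1)) (c m + c (m+1)) = c (m+1) := by
    intro m
    rw [← hconsum m, ← cons_up]
    show upTo a ((m:ℤ)+1) T = upTo a ((m+1 : ℕ) : ℤ) T
    norm_cast
  have hM : ∀ m : ℕ, T ≤ m → c m = 0 := by
    intro m hm
    show upTo a (m:ℤ) T = 0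
    unfold upTo
    rw [Finset.card_eq_zero, Finset.filter_eq_empty_iff]
    intro s hsr
    rw [Finset.mem_range] at hsr
    have := walk_le_time a s
    intro ⟨h1, _⟩
    rw [h1] at this
    have : (m:ℤ) ≤ (s:ℤ) := this
    have : (s:ℤ) < (T:ℤ) := by exact_mod_cast hsr
    omega
  have key : ∀ j m : ℕ, T ≤ m + j → c m + 1 ≤ ustar (posCols a) m := by
    intro j
    induction j with
    | zero =>
      intro m hm
      rw [hM m (by omega)]
      exact ustar_one _ hB m
    | succ j ih =>
      intro m hm
      have h2 := ih (m+1) (by omega)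
      have h3 := ustar_rec (posCols a) hndp hB m
      have h4 : c m ≤ Uminus (posCols a m) (ustar (posCols a) (m+1)) := by
        have hponc : posCols a m = a ((m:ℤ)+1) := rfl
        rw [hponc]
        exact Ulower (a ((m:ℤ)+1)) (hcnt m) h2 (cntT_exists (by exact (hndp m)) _)
      omega
  have hkey0 : c 0 + 1 ≤ n := by
    have := key T 0 (by omega)
    rwa [stab_val (posCols a) hndp hB hs] at this
  -- the walk's step at time T-1 uses coin (0, c 0) and it is `false`
  have hwT1 : walk a (T-1) = 0 := by
    have h1 : T - 1 < T := by omega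
    have h2 := hpre (T-1) h1
    have h3 : T - 1 + 1 = T := by omega
    rcases step_cases a (T-1) with hstep | hstep <;> rw [h3, hT] at hstep <;> omega
  have hdn1 : dnTo a 0 T = 1 := by
    unfold dnTo
    rw [Finset.card_eq_one]
    refine ⟨T-1, ?_⟩
    ext s
    rw [Finset.mem_filter, Finset.mem_range, Finset.mem_singleton]
    constructor
    · rintro ⟨hslt, -, hs2⟩
      have : ¬ (s + 1 < T) := fun hc => hmin (s+1) hc (by omega)
      omega
    · rintro rfl
      have h3 : T - 1 + 1 = T := by omega
      refine ⟨by omega, hwT1, by rw [h3, hT]; norm_num⟩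
  have hvisT : vis a 0 T = c 0 + 1 := by
    have h1 := vis_split a 0 T
    have h2 : upTo a (0:ℤ) T = c 0 := by
      show upTo a (0:ℤ) T = upTo a ((0:ℕ):ℤ) T
      norm_cast
    rw [h1, h2, hdn1]
  have hvisT1 : vis a 0 (T-1) = c 0 := by
    have h3 : T - 1 + 1 = T := by omega
    have := vis_succ a 0 (T-1)
    rw [h3, if_pos hwT1, hvisT] at this
    omega
  have hcoin : a 0 (c 0) = false := by
    have h3 : T - 1 + 1 = T := by omega
    have := (step_dn_iff a (T-1)).1 (by rw [h3, hT, hwT1]; norm_num)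
    rwa [hwT1, hvisT1] at this
  have := hforce (c 0) (by omega)
  rw [this] at hcoin
  simp at hcoin

end FinalDeterministic
section Measurability

lemma measurable_cntT (j : ℕ) : Measurable fun b : ℕ → Bool => cntT b j := by
  induction j with
  | zero => simp only [cntT, Finset.range_zero, Finset.filter_empty, Finset.card_empty]
            exact measurable_const
  | succ j ih =>
    have : (fun b : ℕ → Bool => cntT b (j+1))
        = fun b => cntT b j + (if b j = true then 1 else 0) := by
      funext b; exact card_filter_succ _ j
    rw [this]
    apply Measurable.add ih
    exact (measurable_from_top (f := fun v : Bool => if v = true then (1:ℕ) else 0)).comp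
      (measurable_pi_apply j)

lemma measurable_cntF (j : ℕ) : Measurable fun b : ℕ → Bool => cntF b j := by
  induction j with
  | zero => simp only [cntF, Finset.range_zero, Finset.filter_empty, Finset.card_empty]
            exact measurable_const
  | succ j ih =>
    have : (fun b : ℕ → Bool => cntF b (j+1))
        = fun b => cntF b j + (if b j = false then 1 else 0) := by
      funext b; exact card_filter_succ _ j
    rw [this]
    apply Measurable.add ih
    exact (measurable_from_top (f := fun v : Bool => if v = false then (1:ℕ) else 0)).comp
      (measurable_pi_apply j)

lemma nat_measurableSet (s : Set ℕ) : MeasurableSet s := trivial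

lemma sInf_eq_iff (S : Set ℕ) (v : ℕ) :
    sInf S = v ↔ ((v ∈ S ∧ ∀ i, i < v → i ∉ S) ∨ (v = 0 ∧ ∀ j, j ∉ S)) := by
  constructor
  · intro h
    by_cases hS : S.Nonempty
    · left
      refine ⟨h ▸ Nat.sInf_mem hS, fun i hi hmem => ?_⟩
      have := Nat.sInf_le hmem
      omega
    · right
      rw [Set.not_nonempty_iff_eq_empty] at hS
      subst hS
      rw [Nat.sInf_empty] at h
      exact ⟨h.symm, fun j => id⟩
  · rintro (⟨hmem, hmin⟩ | ⟨rfl, hempty⟩)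
    · refine le_antisymm (Nat.sInf_le hmem) ?_
      by_contra hcon
      push_neg at hcon
      exact hmin _ hcon (Nat.sInf_mem ⟨v, hmem⟩)
    · have : S = ∅ := Set.eq_empty_iff_forall_notMem.mpr hempty
      rw [this, Nat.sInf_empty]

lemma measurable_sInf_cnt (cnt : (ℕ → Bool) → ℕ → ℕ) (hcnt : ∀ j, Measurable fun b => cnt b j)
    (x : ℕ) : Measurable fun b : ℕ → Bool => sInf {j | cnt b j = x} := by
  apply measurable_to_countable'
  intro v
  have heq : (fun b : ℕ → Bool => sInf {j | cnt b j = x}) ⁻¹' {v}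
      = ({b | cnt b v = x} ∩ ⋂ (i : ℕ), ⋂ (_ : i < v), {b | cnt b i = x}ᶜ)
        ∪ (if v = 0 then ⋂ (j : ℕ), {b | cnt b j = x}ᶜ else ∅) := by
    ext b
    simp only [Set.mem_preimage, Set.mem_singleton_iff, Set.mem_union, Set.mem_inter_iff,
      Set.mem_iInter, Set.mem_compl_iff, Set.mem_setOf_eq]
    rw [sInf_eq_iff]
    constructor
    · rintro (⟨h1, h2⟩ | ⟨rfl, h⟩)
      · exact Or.inl ⟨h1, fun i hi => h2 i hi⟩
      · right; rw [if_pos rfl]; simpa using h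
    · rintro (⟨h1, h2⟩ | h)
      · exact Or.inl ⟨h1, h2⟩
      · split at h
        · rename_i hv0
          subst hv0
          right
          exact ⟨rfl, by simpa using h⟩
        · exact absurd h (Set.notMem_empty b)
  rw [heq]
  apply MeasurableSet.union
  · apply MeasurableSet.inter
    · exact (hcnt v) (nat_measurableSet {x})
    · exact MeasurableSet.iInter fun i => MeasurableSet.iInter fun _ =>
        ((hcnt i) (nat_measurableSet {x})).compl
  · split
    · exact MeasurableSet.iInter fun j => ((hcnt j) (nat_measurableSet {x})).compl
    · exact MeasurableSet.empty

lemma measurable_Uplus (x : ℕ) : Measurable fun b : ℕ → Bool => Uplus b x := by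
  unfold Uplus
  by_cases hx : x = 0
  · simp only [hx, if_pos rfl]; exact measurable_const
  · simp only [if_neg hx]
    exact (measurable_from_top (f := fun n : ℕ => n - x)).comp
      (measurable_sInf_cnt cntF measurable_cntF x)

lemma measurable_Uminus (x : ℕ) : Measurable fun b : ℕ → Bool => Uminus b x := by
  unfold Uminus
  exact (measurable_Uplus x).comp
    (measurable_pi_lambda _ fun i =>
      (measurable_from_top (f := fun v : Bool => !v)).comp (measurable_pi_apply i))

lemma measurable_Uminus_pair : Measurable fun p : (ℕ → Bool) × ℕ => Uminus p.1 p.2 := by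
  apply measurable_to_countable'
  intro v
  have heq : (fun p : (ℕ → Bool) × ℕ => Uminus p.1 p.2) ⁻¹' {v}
      = ⋃ (y : ℕ), ((fun p : (ℕ → Bool) × ℕ => Uminus p.1 y) ⁻¹' {v}) ∩ (Prod.snd ⁻¹' {y}) := by
    ext p
    simp only [Set.mem_preimage, Set.mem_singleton_iff, Set.mem_iUnion, Set.mem_inter_iff]
    constructor
    · intro h; exact ⟨p.2, h, rfl⟩
    · rintro ⟨y, h1, h2⟩; rw [← h2] at h1; exact h1
  rw [heq]
  exact MeasurableSet.iUnion fun y =>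
    (((measurable_Uminus y).comp measurable_fst) (nat_measurableSet {v})).inter
      (measurable_snd (nat_measurableSet {y}))

lemma measurable_solAux (k m : ℕ) : Measurable fun c : ℕ → ℕ → Bool => solAux c m k := by
  induction k generalizing m with
  | zero => simp only [solAux_zero]; exact measurable_const
  | succ k ih =>
    simp only [solAux_succ]
    refine Measurable.add_const ?_ 1
    exact measurable_Uminus_pair.comp ((measurable_pi_apply m).prodMk (ih (m+1)))

lemma measurableSet_Bd : MeasurableSet {c : ℕ → ℕ → Bool | Bd c} := by
  have : {c : ℕ → ℕ → Bool | Bd c}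
      = ⋂ (m : ℕ), ⋃ (b : ℕ), ⋂ (k : ℕ), {c | solAux c m k ≤ b} := by
    ext c
    simp only [Set.mem_setOf_eq, Set.mem_iInter, Set.mem_iUnion, Bd]
  rw [this]
  exact MeasurableSet.iInter fun m => MeasurableSet.iUnion fun b =>
    MeasurableSet.iInter fun k => (measurable_solAux k m) (nat_measurableSet {n | n ≤ b})

lemma measurableSet_Stab (n : ℕ) : MeasurableSet {c : ℕ → ℕ → Bool | Stab c n} := by
  have : {c : ℕ → ℕ → Bool | Stab c n}
      = ⋃ (K : ℕ), ⋂ (k : ℕ), {c | K ≤ k → solAux c 0 k = n} := by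
    ext c
    simp only [Set.mem_setOf_eq, Set.mem_iUnion, Set.mem_iInter, Stab]
  rw [this]
  apply MeasurableSet.iUnion
  intro K
  apply MeasurableSet.iInter
  intro k
  by_cases h : K ≤ k
  · have : {c : ℕ → ℕ → Bool | K ≤ k → solAux c 0 k = n} = {c | solAux c 0 k = n} := by
      ext c; simp [h]
    rw [this]
    exact (measurable_solAux k 0) (nat_measurableSet {n})
  · have : {c : ℕ → ℕ → Bool | K ≤ k → solAux c 0 k = n} = Set.univ := by
      ext c; simp [h]
    rw [this]
    exact MeasurableSet.univ

lemma infinite_nat_iff (S : Set ℕ) : S.Infinite ↔ ∀ N, ∃ j, N ≤ j ∧ j ∈ S := by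
  constructor
  · intro h N
    obtain ⟨j, hj, hNj⟩ := h.exists_gt N
    exact ⟨j, hNj.le, hj⟩
  · intro h
    apply Set.infinite_of_forall_exists_gt
    intro N
    obtain ⟨j, h1, h2⟩ := h (N+1)
    exact ⟨j, h2, by omega⟩

lemma measurableSet_NDpos : MeasurableSet {c : ℕ → ℕ → Bool | NDpos c} := by
  have : {c : ℕ → ℕ → Bool | NDpos c}
      = ⋂ (m : ℕ), ⋂ (N : ℕ), ⋃ (j : ℕ), ⋃ (_ : N ≤ j), {c | c m j = true} := by
    ext c
    simp only [Set.mem_setOf_eq, Set.mem_iInter, Set.mem_iUnion, NDpos]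
    constructor
    · intro h m N
      obtain ⟨j, h1, h2⟩ := (infinite_nat_iff _).mp (h m) N
      exact ⟨j, h1, h2⟩
    · intro h m
      rw [infinite_nat_iff]
      intro N
      obtain ⟨j, h1, h2⟩ := h m N
      exact ⟨j, h1, h2⟩
  rw [this]
  refine MeasurableSet.iInter fun m => MeasurableSet.iInter fun N =>
    MeasurableSet.iUnion fun j => MeasurableSet.iUnion fun _ => ?_
  have hm : Measurable fun c : ℕ → ℕ → Bool => c m j :=
    (measurable_pi_apply j).comp (measurable_pi_apply m)
  have heq : {c : ℕ → ℕ → Bool | c m j = true}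
      = (fun c : ℕ → ℕ → Bool => c m j) ⁻¹' {true} := rfl
  rw [heq]
  exact hm (by trivial)

lemma measurable_posCols : Measurable posCols :=
  measurable_pi_lambda _ fun m => measurable_pi_apply _

lemma measurable_decide_lt : Measurable fun q : ℝ × ℝ => decide (q.1 < q.2) := by
  have : (fun q : ℝ × ℝ => decide (q.1 < q.2)) = fun q => if q.1 < q.2 then true else false := by
    funext q; by_cases h : q.1 < q.2 <;> simp [h]
  rw [this]
  exact Measurable.ite (measurableSet_lt measurable_fst measurable_snd)
    measurable_const measurable_const

lemma measurable_arrows : Measurable fun p : CookieSpace × CookieSpace => arrows p.1 p.2 := by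
  apply measurable_pi_lambda
  intro x
  apply measurable_pi_lambda
  intro n
  show Measurable fun p : CookieSpace × CookieSpace => decide (p.2 x n < p.1 x n)
  have h1 : Measurable fun p : CookieSpace × CookieSpace => p.2 x n :=
    (measurable_pi_apply n).comp ((measurable_pi_apply x).comp measurable_snd)
  have h2 : Measurable fun p : CookieSpace × CookieSpace => p.1 x n :=
    (measurable_pi_apply n).comp ((measurable_pi_apply x).comp measurable_fst)
  exact measurable_decide_lt.comp (h1.prodMk h2)

end Measurability
section PIL

/-- restriction of a cookie environment to the coordinates outside `F`. -/
def restrOut (F : Finset (ℤ × ℕ)) (u : CookieSpace) (q : {p : ℤ × ℕ // p ∉ F}) : ℝ :=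
  u q.1.1 q.1.2

lemma measurable_restrOut (F : Finset (ℤ × ℕ)) : Measurable (restrOut F) :=
  measurable_pi_lambda _ fun q =>
    (measurable_pi_apply q.1.2).comp (measurable_pi_apply q.1.1)

lemma measurableSet_cyl (F : Finset (ℤ × ℕ)) (W : ℤ × ℕ → Set ℝ)
    (hW : ∀ p, MeasurableSet (W p)) :
    MeasurableSet {u : CookieSpace | ∀ p ∈ F, u p.1 p.2 ∈ W p} := by
  have : {u : CookieSpace | ∀ p ∈ F, u p.1 p.2 ∈ W p}
      = ⋂ (p : ℤ × ℕ), ⋂ (_ : p ∈ F), (fun u : CookieSpace => u p.1 p.2) ⁻¹' (W p) := by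
    ext u; simp [Set.mem_iInter]
  rw [this]
  exact MeasurableSet.iInter fun p => MeasurableSet.iInter fun _ =>
    ((measurable_pi_apply p.2).comp (measurable_pi_apply p.1)) (hW p)

lemma PIL {PU : Measure CookieSpace} (hPU : IsUniformProduct PU) (F : Finset (ℤ × ℕ))
    (W : ℤ × ℕ → Set ℝ) (hW : ∀ p, MeasurableSet (W p))
    {A : Set ({p : ℤ × ℕ // p ∉ F} → ℝ)} (hA : MeasurableSet A) :
    PU (restrOut F ⁻¹' A ∩ {u | ∀ p ∈ F, u p.1 p.2 ∈ W p})
      = (∏ p ∈ F, volume (W p ∩ Set.Icc (0:ℝ) 1)) * PU (restrOut F ⁻¹' A) := by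
  classical
  haveI : IsProbabilityMeasure PU := hPU.1
  set C₀ := {u : CookieSpace | ∀ p ∈ F, u p.1 p.2 ∈ W p} with hC₀
  have hC₀m : MeasurableSet C₀ := measurableSet_cyl F W hW
  set cF := ∏ p ∈ F, volume (W p ∩ Set.Icc (0:ℝ) 1) with hcF
  set m₁ := Measure.map (restrOut F) (PU.restrict C₀) with hm₁
  set m₂ := cF • Measure.map (restrOut F) PU with hm₂
  have hρ := measurable_restrOut F
  -- common computation on cylinders
  have hcyl : ∀ (s : Finset {p : ℤ × ℕ // p ∉ F}) (t : ∀ _ : {p : ℤ × ℕ // p ∉ F}, Set ℝ),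
      (∀ q, MeasurableSet (t q)) →
      (PU (restrOut F ⁻¹' ((s : Set _).pi t) ∩ C₀)
          = cF * PU (restrOut F ⁻¹' ((s : Set _).pi t))) := by
    intro s t ht
    set B' : ℤ × ℕ → Set ℝ := fun p =>
      if hp : p ∈ F then W p
      else (if p ∈ s.image Subtype.val then t ⟨p, hp⟩ else Set.univ) with hB'
    have hB'm : ∀ p, MeasurableSet (B' p) := by
      intro p
      rw [hB']
      by_cases hp : p ∈ F
      · simp only [dif_pos hp]; exact hW p
      · simp only [dif_neg hp]
        split
        · exact ht _
        · exact MeasurableSet.univ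
    have hmem_im : ∀ p (hp : p ∉ F), p ∈ s.image Subtype.val → B' p = t ⟨p, hp⟩ := by
      intro p hp hpim
      rw [hB']
      simp only [dif_neg hp, if_pos hpim]
    have hmem_F : ∀ p, p ∈ F → B' p = W p := by
      intro p hp
      rw [hB']
      simp only [dif_pos hp]
    have him_notF : ∀ p, p ∈ s.image Subtype.val → p ∉ F := by
      intro p hp
      rw [Finset.mem_image] at hp
      obtain ⟨q, -, rfl⟩ := hp
      exact q.2
    have hdisj : Disjoint (s.image Subtype.val) F :=
      Finset.disjoint_left.mpr him_notF
    -- identification of the inner event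
    have hset1 : restrOut F ⁻¹' ((s : Set _).pi t) ∩ C₀
        = {u : CookieSpace | ∀ p ∈ (s.image Subtype.val) ∪ F, u p.1 p.2 ∈ B' p} := by
      ext u
      simp only [Set.mem_inter_iff, Set.mem_preimage, Set.mem_pi, Set.mem_setOf_eq, hC₀,
        Finset.mem_union, Finset.mem_coe]
      constructor
      · rintro ⟨h1, h2⟩ p hp
        rcases hp with hpim | hpF
        · have hpF' : p ∉ F := him_notF p hpim
          rw [hmem_im p hpF' hpim]
          rw [Finset.mem_image] at hpim
          obtain ⟨q, hq, rfl⟩ := hpim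
          have : (⟨(q : ℤ × ℕ), q.2⟩ : {p : ℤ × ℕ // p ∉ F}) = q := Subtype.ext rfl
          rw [show (⟨(q : ℤ × ℕ), him_notF _ (Finset.mem_image.mpr ⟨q, hq, rfl⟩)⟩ :
            {p : ℤ × ℕ // p ∉ F}) = q from Subtype.ext rfl]
          exact h1 q hq
        · rw [hmem_F p hpF]
          exact h2 p hpF
      · intro h
        constructor
        · intro q hq
          have hpim : (q : ℤ × ℕ) ∈ s.image Subtype.val := Finset.mem_image.mpr ⟨q, hq, rfl⟩
          have := h (q : ℤ × ℕ) (Or.inl hpim)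
          rwa [hmem_im _ q.2 hpim, show (⟨(q : ℤ × ℕ), q.2⟩ : {p : ℤ × ℕ // p ∉ F}) = q from
            Subtype.ext rfl] at this
        · intro p hp
          have := h p (Or.inr hp)
          rwa [hmem_F p hp] at this
    have hset2 : restrOut F ⁻¹' ((s : Set _).pi t)
        = {u : CookieSpace | ∀ p ∈ s.image Subtype.val, u p.1 p.2 ∈ B' p} := by
      ext u
      simp only [Set.mem_preimage, Set.mem_pi, Set.mem_setOf_eq, Finset.mem_coe]
      constructor
      · intro h1 p hpim
        have hpF' : p ∉ F := him_notF p hpim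
        rw [hmem_im p hpF' hpim]
        rw [Finset.mem_image] at hpim
        obtain ⟨q, hq, rfl⟩ := hpim
        rw [show (⟨(q : ℤ × ℕ), hpF'⟩ : {p : ℤ × ℕ // p ∉ F}) = q from Subtype.ext rfl]
        exact h1 q hq
      · intro h q hq
        have hpim : (q : ℤ × ℕ) ∈ s.image Subtype.val := Finset.mem_image.mpr ⟨q, hq, rfl⟩
        have := h (q : ℤ × ℕ) hpim
        rwa [hmem_im _ q.2 hpim, show (⟨(q : ℤ × ℕ), q.2⟩ : {p : ℤ × ℕ // p ∉ F}) = q from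
          Subtype.ext rfl] at this
    rw [hset1, hset2, hPU.2 _ _ hB'm, hPU.2 _ _ hB'm,
      Finset.prod_union hdisj]
    have hprodF : ∏ p ∈ F, volume (B' p ∩ Set.Icc (0:ℝ) 1) = cF := by
      apply Finset.prod_congr rfl
      intro p hp
      rw [hmem_F p hp]
    rw [hprodF]
    ring
  -- measures agree
  have hm : m₁ = m₂ := by
    refine MeasureTheory.ext_of_generate_finite
      (squareCylinders fun _ : {p : ℤ × ℕ // p ∉ F} => {s : Set ℝ | MeasurableSet s})
      generateFrom_squareCylinders.symm
      (isPiSystem_squareCylinders (fun _ => MeasurableSpace.isPiSystem_measurableSet)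
        (fun _ => by simp))
      ?_ ?_
    · rintro S ⟨s, t, htm, rfl⟩
      rw [Set.mem_univ_pi] at htm
      have htS : MeasurableSet ((s : Set _).pi t) :=
        MeasurableSet.pi (Finset.countable_toSet _) (fun q _ => htm q)
      rw [hm₁, Measure.map_apply hρ htS, Measure.restrict_apply (hρ htS)]
      rw [hm₂, Measure.smul_apply, Measure.map_apply hρ htS, smul_eq_mul]
      exact hcyl s t htm
    · rw [hm₁, hm₂, Measure.map_apply hρ MeasurableSet.univ, Measure.smul_apply,
        Measure.map_apply hρ MeasurableSet.univ]
      simp only [Set.preimage_univ, Measure.restrict_apply MeasurableSet.univ, Set.univ_inter,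
        smul_eq_mul, measure_univ, mul_one]
      have := hPU.2 F W hW
      exact this
  have h1 : m₁ A = PU (restrOut F ⁻¹' A ∩ C₀) := by
    rw [hm₁, Measure.map_apply hρ hA, Measure.restrict_apply (hρ hA)]
  have h2 : m₂ A = cF * PU (restrOut F ⁻¹' A) := by
    rw [hm₂, Measure.smul_apply, Measure.map_apply hρ hA, smul_eq_mul]
  rw [← h1, ← h2, hm]

end PIL
section Assembly

lemma vol_Iio_Icc (w : ℝ) :
    volume (Set.Iio w ∩ Set.Icc (0:ℝ) 1) = ENNReal.ofReal (min w 1) := by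
  rcases le_or_gt w 0 with hw | hw
  · have he : Set.Iio w ∩ Set.Icc (0:ℝ) 1 = ∅ := by
      ext x
      simp only [Set.mem_inter_iff, Set.mem_Iio, Set.mem_Icc, Set.mem_empty_iff_false, iff_false]
      rintro ⟨h1, h2, -⟩; linarith
    rw [he, measure_empty, Eq.comm, ENNReal.ofReal_eq_zero]
    exact le_trans (min_le_left _ _) hw
  · rcases le_or_gt w 1 with hw1 | hw1
    · have he : Set.Iio w ∩ Set.Icc (0:ℝ) 1 = Set.Ico 0 w := by
        ext x
        simp only [Set.mem_inter_iff, Set.mem_Iio, Set.mem_Icc, Set.mem_Ico]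
        constructor
        · rintro ⟨h1, h2, -⟩; exact ⟨h2, h1⟩
        · rintro ⟨h1, h2⟩; exact ⟨h2, h1, by linarith⟩
      rw [he, Real.volume_Ico, min_eq_left hw1, sub_zero]
    · have he : Set.Iio w ∩ Set.Icc (0:ℝ) 1 = Set.Icc 0 1 := by
        ext x
        simp only [Set.mem_inter_iff, Set.mem_Iio, Set.mem_Icc]
        constructor
        · rintro ⟨h1, h2⟩; exact h2
        · rintro ⟨h1, h2⟩; exact ⟨by linarith, h1, h2⟩
      rw [he, Real.volume_Icc, min_eq_right hw1.le, sub_zero]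

/-- the finite slot set forced at site `0`. -/
def Fn (n : ℕ) : Finset (ℤ × ℕ) := (Finset.range n).image (fun j => ((0:ℤ), j))

lemma mem_Fn (n : ℕ) (p : ℤ × ℕ) : p ∈ Fn n ↔ p.1 = 0 ∧ p.2 < n := by
  unfold Fn
  rw [Finset.mem_image]
  constructor
  · rintro ⟨j, hj, rfl⟩
    rw [Finset.mem_range] at hj
    exact ⟨rfl, hj⟩
  · rintro ⟨h1, h2⟩
    exact ⟨p.2, Finset.mem_range.mpr h2, by rw [← h1]⟩

lemma not_mem_Fn (n m j : ℕ) : ((m:ℤ)+1, j) ∉ Fn n := by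
  rw [mem_Fn]
  rintro ⟨h1, -⟩
  simp only at h1
  have := Int.natCast_nonneg m
  omega

/-- the target event for the positive columns. -/
def D0 (n : ℕ) : Set (ℕ → ℕ → Bool) := {c | NDpos c ∧ Bd c ∧ Stab c n}

lemma measurableSet_D0 (n : ℕ) : MeasurableSet (D0 n) := by
  have : D0 n = {c | NDpos c} ∩ ({c | Bd c} ∩ {c | Stab c n}) := by
    ext c; simp [D0, Set.mem_inter_iff, Set.mem_setOf_eq, and_assoc]
  rw [this]
  exact measurableSet_NDpos.inter (measurableSet_Bd.inter (measurableSet_Stab n))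

/-- reconstruction of the positive columns of the arrows from the coordinates outside `Fn n`. -/
noncomputable def Gmap (n : ℕ) (ω : CookieSpace) (v : {p : ℤ × ℕ // p ∉ Fn n} → ℝ) :
    ℕ → ℕ → Bool :=
  fun m j => decide (v ⟨((m:ℤ)+1, j), not_mem_Fn n m j⟩ < ω ((m:ℤ)+1) j)

lemma posCols_arrows (n : ℕ) (ω u : CookieSpace) :
    posCols (arrows ω u) = Gmap n ω (restrOut (Fn n) u) := by
  funext m j
  rfl

lemma measurable_decide_lt_const (r : ℝ) : Measurable fun x : ℝ => decide (x < r) := by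
  have : (fun x : ℝ => decide (x < r)) = fun x => if x < r then true else false := by
    funext x; by_cases h : x < r <;> simp [h]
  rw [this]
  exact Measurable.ite measurableSet_Iio measurable_const measurable_const

lemma measurable_Gmap (n : ℕ) (ω : CookieSpace) : Measurable (Gmap n ω) := by
  apply measurable_pi_lambda
  intro m
  apply measurable_pi_lambda
  intro j
  exact (measurable_decide_lt_const _).comp (measurable_pi_apply _)

end Assembly
/-- for elliptic non-degenerate stationary ergodic `μ`,
`ℙ₀(T₋₁ = ∞) > 0` iff `ℙ₀(A⁺) > 0`. -/
theorem stmt_14 (μ PU : Measure CookieSpace) [IsProbabilityMeasure μ]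
    (herg : Ergodic shiftC μ) (hell : EllipticAE μ) (hPU : IsUniformProduct PU)
    (hnd : ∀ᵐ a ∂(annealed μ PU), NonDegEnv a) :
    0 < annealed μ PU {a | ∀ t, walk a t ≠ -1} ↔
      0 < annealed μ PU {a | Filter.Tendsto (walk a) Filter.atTop Filter.atTop} := by
  classical
  haveI hPUp : IsProbabilityMeasure PU := hPU.1
  set Q := annealed μ PU with hQdef
  have hNDnull : Q {a | ¬ NonDegEnv a} = 0 := by
    rw [← MeasureTheory.ae_iff]; exact hnd
  constructor
  · intro hpos
    have hsub : {a : ArrowSpace | ∀ t, walk a t ≠ -1} ∩ {a | NonDegEnv a}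
        ⊆ {a | Filter.Tendsto (walk a) Filter.atTop Filter.atTop} := by
      rintro a ⟨h1, h2⟩
      exact tendsto_of_never a h2 h1
    have hcover : {a : ArrowSpace | ∀ t, walk a t ≠ -1}
        ⊆ ({a | ∀ t, walk a t ≠ -1} ∩ {a | NonDegEnv a}) ∪ {a | ¬ NonDegEnv a} := by
      intro a ha
      by_cases h : NonDegEnv a
      · exact Or.inl ⟨ha, h⟩
      · exact Or.inr h
    have h1 : Q {a : ArrowSpace | ∀ t, walk a t ≠ -1}
        ≤ Q ({a | ∀ t, walk a t ≠ -1} ∩ {a | NonDegEnv a}) + Q {a | ¬ NonDegEnv a} :=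
      (measure_mono hcover).trans (measure_union_le _ _)
    rw [hNDnull, add_zero] at h1
    exact lt_of_lt_of_le hpos (h1.trans (measure_mono hsub))
  · intro hpos
    set G := fun p : CookieSpace × CookieSpace => arrows p.1 p.2 with hG
    have hGm : Measurable G := measurable_arrows
    have hQm : ∀ E : Set ArrowSpace, MeasurableSet E → Q E = (μ.prod PU) (G ⁻¹' E) := by
      intro E hE
      rw [hQdef]
      have hann : annealed μ PU = (μ.prod PU).map G := rfl
      rw [hann, Measure.map_apply hGm hE]
    have hdsub : {a : ArrowSpace | Filter.Tendsto (walk a) Filter.atTop Filter.atTop}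
        ⊆ {a | ¬ NonDegEnv a} ∪ ⋃ n : ℕ, posCols ⁻¹' D0 n := by
      intro a ha
      by_cases hND : NonDegEnv a
      · right
        have hndp : NDpos (posCols a) := fun m => (hND ((m:ℤ)+1)).2
        have hB : Bd (posCols a) := bd_of_tendsto a hND ha
        have hstab : Stab (posCols a) (ustar (posCols a) 0) := stab_exists _ hndp hB
        exact Set.mem_iUnion.mpr ⟨ustar (posCols a) 0, ⟨hndp, hB, hstab⟩⟩
      · exact Or.inl hND
    have hDm : ∀ n : ℕ, MeasurableSet (posCols ⁻¹' D0 n) :=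
      fun n => measurable_posCols (measurableSet_D0 n)
    have hsum : ∃ n : ℕ, Q (posCols ⁻¹' D0 n) ≠ 0 := by
      by_contra hcon
      push_neg at hcon
      have h1 : Q {a : ArrowSpace | Filter.Tendsto (walk a) Filter.atTop Filter.atTop}
          ≤ Q {a | ¬ NonDegEnv a} + Q (⋃ n : ℕ, posCols ⁻¹' D0 n) :=
        (measure_mono hdsub).trans (measure_union_le _ _)
      have h2 : Q (⋃ n : ℕ, posCols ⁻¹' D0 n) ≤ ∑' n : ℕ, Q (posCols ⁻¹' D0 n) :=
        measure_iUnion_le _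
      rw [hNDnull, zero_add] at h1
      have h3 : (∑' n : ℕ, Q (posCols ⁻¹' D0 n)) = 0 := by simp [hcon]
      have h4 := lt_of_lt_of_le hpos ((h1.trans h2).trans (le_of_eq h3))
      exact absurd h4 (by simp)
    obtain ⟨n, hn⟩ := hsum
    set Tn := {a : ArrowSpace | ∀ j, j < n → a 0 j = true} with hTn
    have hTnm : MeasurableSet Tn := by
      have heq : Tn = ⋂ (j : ℕ), ⋂ (_ : j < n), (fun a : ArrowSpace => a 0 j) ⁻¹' {true} := by
        ext a; simp [hTn, Set.mem_iInter]
      rw [heq]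
      exact MeasurableSet.iInter fun j => MeasurableSet.iInter fun _ =>
        ((measurable_pi_apply j).comp (measurable_pi_apply 0)) (by trivial)
    have hsliceD : ∀ ω : CookieSpace,
        (Prod.mk ω ⁻¹' (G ⁻¹' (posCols ⁻¹' D0 n)))
          = restrOut (Fn n) ⁻¹' (Gmap n ω ⁻¹' D0 n) := by
      intro ω
      ext u
      simp only [Set.mem_preimage]
      show posCols (arrows ω u) ∈ D0 n ↔ Gmap n ω (restrOut (Fn n) u) ∈ D0 n
      rw [posCols_arrows n ω u]
    have hsliceT : ∀ ω : CookieSpace,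
        (Prod.mk ω ⁻¹' (G ⁻¹' Tn))
          = {u : CookieSpace | ∀ p ∈ Fn n, u p.1 p.2 ∈ Set.Iio (ω p.1 p.2)} := by
      intro ω
      ext u
      simp only [Set.mem_preimage, hTn, Set.mem_setOf_eq, Set.mem_Iio]
      constructor
      · intro h p hp
        rw [mem_Fn] at hp
        obtain ⟨h1, h2⟩ := hp
        have h3 := h p.2 h2
        rw [hG] at h3
        simp only [arrows, decide_eq_true_eq] at h3
        rw [h1]
        exact h3
      · intro h j hj
        have h3 := h ((0:ℤ), j) ((mem_Fn n _).mpr ⟨rfl, hj⟩)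
        show decide (u 0 j < ω 0 j) = true
        rw [decide_eq_true_eq]
        exact h3
    have hAm : ∀ ω : CookieSpace, MeasurableSet (Gmap n ω ⁻¹' D0 n) :=
      fun ω => measurable_Gmap n ω (measurableSet_D0 n)
    have hkey : ∀ ω : CookieSpace,
        PU (Prod.mk ω ⁻¹' (G ⁻¹' (posCols ⁻¹' D0 n ∩ Tn)))
          = (∏ p ∈ Fn n, volume (Set.Iio (ω p.1 p.2) ∩ Set.Icc (0:ℝ) 1))
              * PU (Prod.mk ω ⁻¹' (G ⁻¹' (posCols ⁻¹' D0 n))) := by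
      intro ω
      have hpre : Prod.mk ω ⁻¹' (G ⁻¹' (posCols ⁻¹' D0 n ∩ Tn))
          = (Prod.mk ω ⁻¹' (G ⁻¹' (posCols ⁻¹' D0 n))) ∩ (Prod.mk ω ⁻¹' (G ⁻¹' Tn)) := by
        rw [Set.preimage_inter, Set.preimage_inter]
      rw [hpre, hsliceD ω, hsliceT ω]
      exact PIL hPU (Fn n) (fun p => Set.Iio (ω p.1 p.2)) (fun p => measurableSet_Iio) (hAm ω)
    have hQD : Q (posCols ⁻¹' D0 n)
        = ∫⁻ ω, PU (Prod.mk ω ⁻¹' (G ⁻¹' (posCols ⁻¹' D0 n))) ∂μ := by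
      rw [hQm _ (hDm n), Measure.prod_apply (hGm (hDm n))]
    have hDTm : MeasurableSet (posCols ⁻¹' D0 n ∩ Tn) := (hDm n).inter hTnm
    have hQDT : Q (posCols ⁻¹' D0 n ∩ Tn)
        = ∫⁻ ω, PU (Prod.mk ω ⁻¹' (G ⁻¹' (posCols ⁻¹' D0 n ∩ Tn))) ∂μ := by
      rw [hQm _ hDTm, Measure.prod_apply (hGm hDTm)]
    have hQDTpos : Q (posCols ⁻¹' D0 n ∩ Tn) ≠ 0 := by
      intro h0
      rw [hQDT] at h0
      have hfm : Measurable fun ω => PU (Prod.mk ω ⁻¹' (G ⁻¹' (posCols ⁻¹' D0 n ∩ Tn))) :=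
        measurable_measure_prodMk_left (hGm hDTm)
      rw [lintegral_eq_zero_iff hfm] at h0
      have hgz : ∀ᵐ ω ∂μ, PU (Prod.mk ω ⁻¹' (G ⁻¹' (posCols ⁻¹' D0 n))) = 0 := by
        filter_upwards [h0, hell] with ω hω hellω
        simp only [Pi.zero_apply] at hω
        rw [hkey ω] at hω
        rcases mul_eq_zero.mp hω with hc | hg
        · exfalso
          rw [Finset.prod_eq_zero_iff] at hc
          obtain ⟨p, hp, hzero⟩ := hc
          rw [vol_Iio_Icc, ENNReal.ofReal_eq_zero] at hzero
          have h1 := (hellω p.1 p.2).1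
          have h2 : (0:ℝ) < min (ω p.1 p.2) 1 := lt_min h1 one_pos
          linarith
        · exact hg
      have hQD0 : Q (posCols ⁻¹' D0 n) = 0 := by
        rw [hQD, lintegral_congr_ae (g := fun _ => (0:ℝ≥0∞)) hgz]
        simp
      exact hn hQD0
    have hfinal : posCols ⁻¹' D0 n ∩ Tn ⊆ {a : ArrowSpace | ∀ t, walk a t ≠ -1} := by
      rintro a ⟨hD, hT⟩
      obtain ⟨hndp, hB, hstab⟩ := hD
      exact never_of_flow a hndp hB hstab (fun j hj => hT j hj)
    calc (0:ℝ≥0∞) < Q (posCols ⁻¹' D0 n ∩ Tn) := pos_iff_ne_zero.mpr hQDTpos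
      _ ≤ Q {a | ∀ t, walk a t ≠ -1} := measure_mono hfinal
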